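/- Let A ∈ ℝ^{n×n}, B ∈ ℝⁿ with B ≠ 0, let P and Q be symmetric positive definite n×n real matrices, μ > 0 and N ≥ 1. Define the cost J(U,x) = x_NᵀPx_N + Σ_{i=0}^{N−1} x_iᵀQx_i + μΣ_{i=0}^{N−1}|u_i| (with x₀ = x, x_{i+1} = Ax_i + Bu_i) and the value function V(x) = inf_{U∈ℝ^N} J(U,x). Define G = Q̄^{1/2}Φ and H = −Q̄^{1/2}Υ as in the stacked formulation, G⁺ = (GᵀG)⁻¹Gᵀ, a₁ = μ√N·σ_max(G⁺H) and a₂ = σ_max²((GG⁺ − I)H), where σ_max(M) denotes the largest singular value of M. Then for every x ∈ ℝⁿ: λ_min(Q)‖x‖₂² ≤ V(x) ≤ a₁‖x‖₂ + (a₂ + λ_max(Q))‖x‖₂². -/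

import Mathlib

open Matrix

/-- Predicted state sequence of the plant `x(i+1) = A x(i) + u(i) • B` started at `x`. -/
noncomputable def stateSeq {n : ℕ} (A : Matrix (Fin n) (Fin n) ℝ) (B : Fin n → ℝ)
    (x : Fin n → ℝ) (u : ℕ → ℝ) : ℕ → Fin n → ℝ
  | 0 => x
  | i + 1 => A.mulVec (stateSeq A B x u i) + u i • B

/-- The finite-horizon `ℓ¹/ℓ²` cost
`J(U,x) = x_NᵀPx_N + Σ_{i<N} x_iᵀQx_i + μ Σ_{i<N} |u_i|`,
where `x_0 = x` and `x_{i+1} = A x_i + B u_i`. -/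
noncomputable def costJ {n N : ℕ} (A : Matrix (Fin n) (Fin n) ℝ) (B : Fin n → ℝ)
    (P Q : Matrix (Fin n) (Fin n) ℝ) (μ : ℝ) (U : Fin N → ℝ) (x : Fin n → ℝ) : ℝ :=
  let u : ℕ → ℝ := fun i => if h : i < N then U ⟨i, h⟩ else 0
  stateSeq A B x u N ⬝ᵥ P.mulVec (stateSeq A B x u N)
    + ∑ i : Fin N, stateSeq A B x u i ⬝ᵥ Q.mulVec (stateSeq A B x u i)
    + μ * ∑ i : Fin N, |U i|

open Classical in
/-- The positive semidefinite square root of a positive semidefinite matrix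
(junk value `0` on matrices that are not positive semidefinite). -/
noncomputable def matSqrt {k : Type*} [Fintype k] [DecidableEq k]
    (M : Matrix k k ℝ) : Matrix k k ℝ :=
  if h : M.PosSemidef then
    h.1.eigenvectorUnitary.1 * diagonal ((RCLike.ofReal : ℝ → ℝ) ∘ (√·) ∘ h.1.eigenvalues) *
      (star h.1.eigenvectorUnitary : Matrix k k ℝ)
  else 0

/-- The block lower-triangular matrix `Φ ∈ ℝ^{Nn×N}` whose `(i,j)` block (0-indexed,
`j ≤ i`) is the column vector `A^{i−j}B ∈ ℝⁿ`. -/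
noncomputable def PhiMat {n : ℕ} (N : ℕ) (A : Matrix (Fin n) (Fin n) ℝ) (B : Fin n → ℝ) :
    Matrix (Fin N × Fin n) (Fin N) ℝ :=
  fun ip j =>
    if (j : ℕ) ≤ (ip.1 : ℕ) then ((A ^ ((ip.1 : ℕ) - (j : ℕ))).mulVec B) ip.2 else 0

/-- The matrix `Υ ∈ ℝ^{Nn×n}`, the vertical stack of `A, A², …, A^N`. -/
noncomputable def UpsMat {n : ℕ} (N : ℕ) (A : Matrix (Fin n) (Fin n) ℝ) :
    Matrix (Fin N × Fin n) (Fin n) ℝ :=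
  fun ip q => (A ^ ((ip.1 : ℕ) + 1)) ip.2 q

/-- The block diagonal weighting matrix `Q̄ = blockdiag(Q,…,Q,P)` (N−1 copies of `Q`
followed by one `P`). -/
noncomputable def QbarMat {n : ℕ} (N : ℕ) (P Q : Matrix (Fin n) (Fin n) ℝ) :
    Matrix (Fin N × Fin n) (Fin N × Fin n) ℝ :=
  fun ip jq =>
    if ip.1 = jq.1 then
      (if (ip.1 : ℕ) = N - 1 then P ip.2 jq.2 else Q ip.2 jq.2)
    else 0

/-- The largest singular value `σ_max(M) = √(λ_max(MᵀM))` of a matrix. -/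
noncomputable def sigmaMax {m p : Type*} [Fintype m] [Fintype p] [DecidableEq p]
    (M : Matrix m p ℝ) : ℝ :=
  Real.sqrt (⨆ i, (Matrix.posSemidef_conjTranspose_mul_self M).1.eigenvalues i)

/-! ### Auxiliary lemmas -/

lemma unitary_dot_aux {k : Type*} [Fintype k] [DecidableEq k]
    {M : Matrix k k ℝ} (hM : M.IsHermitian) (v : k → ℝ) :
    v ⬝ᵥ M *ᵥ v = ∑ i, hM.eigenvalues i * ((hM.eigenvectorUnitary : Matrix k k ℝ)ᵀ *ᵥ v) i ^ 2
    ∧ v ⬝ᵥ v = ∑ i, ((hM.eigenvectorUnitary : Matrix k k ℝ)ᵀ *ᵥ v) i ^ 2 := by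
  set S : Matrix k k ℝ := (hM.eigenvectorUnitary : Matrix k k ℝ) with hS
  have hstar : star S = Sᵀ := by
    ext i j; simp [Matrix.star_apply]
  have hUU : S * Sᵀ = 1 := by
    rw [← hstar]; exact Matrix.mem_unitaryGroup_iff.mp hM.eigenvectorUnitary.2
  set w : k → ℝ := Sᵀ *ᵥ v with hw
  constructor
  · conv_lhs => rw [hM.spectral_theorem]; simp only [Unitary.conjStarAlgAut_apply, Unitary.coe_star]
    rw [hstar]
    rw [← Matrix.mulVec_mulVec, ← Matrix.mulVec_mulVec, Matrix.dotProduct_mulVec,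
      ← Matrix.mulVec_transpose]
    simp only [← hw]
    simp only [dotProduct, Matrix.mulVec_diagonal, Function.comp, sq,
      RCLike.ofReal_real_eq_id, id]
    exact Finset.sum_congr rfl fun i _ => by ring
  · have : w ⬝ᵥ w = v ⬝ᵥ v := by
      rw [hw, Matrix.dotProduct_mulVec (Sᵀ *ᵥ v) Sᵀ v, Matrix.vecMul_transpose,
        Matrix.mulVec_mulVec, hUU, Matrix.one_mulVec]
    rw [← this]
    simp [dotProduct, sq]

lemma rayleigh_le {k : Type*} [Fintype k] [DecidableEq k]
    {M : Matrix k k ℝ} (hM : M.IsHermitian) (v : k → ℝ) :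
    v ⬝ᵥ M *ᵥ v ≤ (⨆ i, hM.eigenvalues i) * (v ⬝ᵥ v) := by
  obtain ⟨h1, h2⟩ := unitary_dot_aux hM v
  rw [h1, h2, Finset.mul_sum]
  exact Finset.sum_le_sum fun i _ => mul_le_mul_of_nonneg_right
    (le_ciSup (Set.Finite.bddAbove (Set.finite_range _)) i) (sq_nonneg _)

lemma rayleigh_ge {k : Type*} [Fintype k] [DecidableEq k]
    {M : Matrix k k ℝ} (hM : M.IsHermitian) (v : k → ℝ) :
    (⨅ i, hM.eigenvalues i) * (v ⬝ᵥ v) ≤ v ⬝ᵥ M *ᵥ v := by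
  obtain ⟨h1, h2⟩ := unitary_dot_aux hM v
  rw [h1, h2, Finset.mul_sum]
  exact Finset.sum_le_sum fun i _ => mul_le_mul_of_nonneg_right
    (ciInf_le (Set.Finite.bddBelow (Set.finite_range _)) i) (sq_nonneg _)

lemma sigmaMax_nonneg {m p : Type*} [Fintype m] [Fintype p] [DecidableEq p]
    (M : Matrix m p ℝ) : 0 ≤ sigmaMax M := Real.sqrt_nonneg _

lemma mulVec_dot_le {m p : Type*} [Fintype m] [Fintype p] [DecidableEq p]
    (M : Matrix m p ℝ) (v : p → ℝ) :
    (M *ᵥ v) ⬝ᵥ (M *ᵥ v) ≤ sigmaMax M ^ 2 * (v ⬝ᵥ v) := by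
  have hT : Mᴴ = Mᵀ := by ext i j; simp [Matrix.conjTranspose_apply]
  have hkey : (M *ᵥ v) ⬝ᵥ (M *ᵥ v) = v ⬝ᵥ (Mᴴ * M) *ᵥ v := by
    rw [hT, ← Matrix.mulVec_mulVec, Matrix.dotProduct_mulVec v Mᵀ,
      Matrix.vecMul_transpose, dotProduct_comm]
  have hsq : sigmaMax M ^ 2
      = ⨆ i, (Matrix.posSemidef_conjTranspose_mul_self M).1.eigenvalues i := by
    rw [sigmaMax, Real.sq_sqrt]
    exact Real.iSup_nonneg fun i =>
      (Matrix.posSemidef_conjTranspose_mul_self M).eigenvalues_nonneg i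
  rw [hkey, hsq]
  exact rayleigh_le _ v

lemma sqrt_mulVec_dot_le {m p : Type*} [Fintype m] [Fintype p] [DecidableEq p]
    (M : Matrix m p ℝ) (v : p → ℝ) :
    Real.sqrt ((M *ᵥ v) ⬝ᵥ (M *ᵥ v)) ≤ sigmaMax M * Real.sqrt (v ⬝ᵥ v) := by
  have h := Real.sqrt_le_sqrt (mulVec_dot_le M v)
  rwa [Real.sqrt_mul (sq_nonneg _), Real.sqrt_sq (sigmaMax_nonneg M)] at h

lemma sum_abs_le_sqrt {N : ℕ} (v : Fin N → ℝ) :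
    ∑ i, |v i| ≤ Real.sqrt N * Real.sqrt (v ⬝ᵥ v) := by
  have h := sq_sum_le_card_mul_sum_sq (s := (Finset.univ : Finset (Fin N))) (f := fun i => |v i|)
  have h0 : 0 ≤ ∑ i, |v i| := Finset.sum_nonneg fun i _ => abs_nonneg _
  have h1 : ∑ i, |v i| = Real.sqrt ((∑ i, |v i|) ^ 2) := (Real.sqrt_sq h0).symm
  rw [h1, ← Real.sqrt_mul (by positivity)]
  refine Real.sqrt_le_sqrt ?_
  have h2 : v ⬝ᵥ v = ∑ i, |v i| ^ 2 := by
    simp [dotProduct, sq_abs, sq]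
  rw [h2]
  simpa using h

lemma stateSeq_closed {n : ℕ} (A : Matrix (Fin n) (Fin n) ℝ) (B : Fin n → ℝ)
    (x : Fin n → ℝ) (u : ℕ → ℝ) (k : ℕ) :
    stateSeq A B x u k
      = (A ^ k) *ᵥ x + ∑ j ∈ Finset.range k, u j • ((A ^ (k - 1 - j)) *ᵥ B) := by
  induction k with
  | zero => simp [stateSeq]
  | succ k ih =>
    show A.mulVec (stateSeq A B x u k) + u k • B = _
    rw [ih, Finset.sum_range_succ]
    have h1 : A *ᵥ ((A ^ k) *ᵥ x) = (A ^ (k + 1)) *ᵥ x := by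
      rw [Matrix.mulVec_mulVec, ← pow_succ']
    have h2 : ∀ j ∈ Finset.range k,
        u j • ((A ^ (k + 1 - 1 - j)) *ᵥ B) = A *ᵥ (u j • ((A ^ (k - 1 - j)) *ᵥ B)) := by
      intro j hj
      rw [Finset.mem_range] at hj
      have he : k + 1 - 1 - j = (k - 1 - j) + 1 := by omega
      rw [he, pow_succ', ← Matrix.mulVec_mulVec, Matrix.mulVec_smul]
    rw [Matrix.mulVec_add, h1, Finset.sum_congr rfl h2]
    have h3 : u k • ((A ^ (k + 1 - 1 - k)) *ᵥ B) = u k • B := by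
      norm_num
    rw [h3]
    have h4 : A *ᵥ (∑ j ∈ Finset.range k, u j • ((A ^ (k - 1 - j)) *ᵥ B))
        = ∑ j ∈ Finset.range k, A *ᵥ (u j • ((A ^ (k - 1 - j)) *ᵥ B)) := by
      simp only [← Matrix.mulVecLin_apply, map_sum]
    rw [h4]
    abel

lemma state_stacked {n N : ℕ} (A : Matrix (Fin n) (Fin n) ℝ) (B : Fin n → ℝ)
    (x : Fin n → ℝ) (U : Fin N → ℝ) (i : Fin N) (p : Fin n) :
    stateSeq A B x (fun j => if h : j < N then U ⟨j, h⟩ else 0) ((i : ℕ) + 1) p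
      = (PhiMat N A B *ᵥ U) (i, p) + (UpsMat N A *ᵥ x) (i, p) := by
  set u : ℕ → ℝ := fun j => if h : j < N then U ⟨j, h⟩ else 0 with hu
  rw [stateSeq_closed]
  have hups : (UpsMat N A *ᵥ x) (i, p) = ((A ^ ((i : ℕ) + 1)) *ᵥ x) p := rfl
  have hphi : (PhiMat N A B *ᵥ U) (i, p)
      = ∑ j ∈ Finset.range ((i : ℕ) + 1), u j * ((A ^ ((i : ℕ) + 1 - 1 - j)) *ᵥ B) p := by
    have e1 : (PhiMat N A B *ᵥ U) (i, p)
        = ∑ j ∈ Finset.range N,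
            (if j ≤ (i : ℕ) then ((A ^ ((i : ℕ) - j)) *ᵥ B) p else 0) * u j := by
      rw [show (PhiMat N A B *ᵥ U) (i, p)
          = ∑ j : Fin N, (if (j : ℕ) ≤ (i : ℕ) then ((A ^ ((i : ℕ) - (j : ℕ))) *ᵥ B) p else 0) * U j
          from rfl]
      rw [← Fin.sum_univ_eq_sum_range
        (fun j => (if j ≤ (i : ℕ) then ((A ^ ((i : ℕ) - j)) *ᵥ B) p else 0) * u j) N]
      refine Finset.sum_congr rfl fun j _ => ?_
      have : u (j : ℕ) = U j := by simp [hu]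
      rw [this]
    rw [e1]
    rw [← Finset.sum_subset (Finset.range_subset_range.mpr i.isLt)
      (fun j _ hj => by
        rw [Finset.mem_range, Nat.lt_succ_iff, not_le] at hj
        rw [if_neg (by omega), zero_mul])]
    refine Finset.sum_congr rfl fun j hj => ?_
    rw [Finset.mem_range, Nat.lt_succ_iff] at hj
    rw [if_pos hj, mul_comm]
    congr 3
  rw [hphi, hups]
  simp only [Pi.add_apply, Finset.sum_apply, Pi.smul_apply, smul_eq_mul]
  ring

lemma qbar_dot {n N : ℕ} (P Q : Matrix (Fin n) (Fin n) ℝ) (v w : Fin N × Fin n → ℝ) :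
    v ⬝ᵥ (QbarMat N P Q *ᵥ w)
      = ∑ i : Fin N, (fun p => v (i, p)) ⬝ᵥ
          ((if (i : ℕ) = N - 1 then P else Q) *ᵥ (fun p => w (i, p))) := by
  simp only [dotProduct, Matrix.mulVec, QbarMat, Fintype.sum_prod_type]
  refine Finset.sum_congr rfl fun i _ => ?_
  refine Finset.sum_congr rfl fun p _ => ?_
  congr 1
  rw [Finset.sum_comm]
  refine Finset.sum_congr rfl fun q _ => ?_
  simp only [ite_mul, zero_mul]
  rw [Finset.sum_ite_eq]
  simp [apply_ite (fun M : Matrix (Fin n) (Fin n) ℝ => M p q)]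

lemma qbar_psd {n N : ℕ} {P Q : Matrix (Fin n) (Fin n) ℝ} (hP : P.PosDef) (hQ : Q.PosDef) :
    (QbarMat N P Q).PosSemidef := by
  refine Matrix.PosSemidef.of_dotProduct_mulVec_nonneg ?_ ?_
  · ext ⟨i, p⟩ ⟨j, q⟩
    simp only [Matrix.conjTranspose_apply, QbarMat, star_trivial]
    by_cases h : j = i
    · subst h
      simp only [if_pos rfl]
      by_cases h2 : (j : ℕ) = N - 1
      · rw [if_pos h2, if_pos h2]
        have := congrFun (congrFun hP.1 p) q
        simpa [Matrix.conjTranspose_apply] using this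
      · rw [if_neg h2, if_neg h2]
        have := congrFun (congrFun hQ.1 p) q
        simpa [Matrix.conjTranspose_apply] using this
    · rw [if_neg h, if_neg (fun hh => h hh.symm)]
  · intro v
    rw [star_trivial, qbar_dot]
    refine Finset.sum_nonneg fun i _ => ?_
    by_cases h : (i : ℕ) = N - 1
    · rw [if_pos h]
      simpa using hP.posSemidef.dotProduct_mulVec_nonneg (fun p => v (i, p))
    · rw [if_neg h]
      simpa using hQ.posSemidef.dotProduct_mulVec_nonneg (fun p => v (i, p))

lemma cost_decomp {n N : ℕ} (hN : 1 ≤ N) (A : Matrix (Fin n) (Fin n) ℝ) (B : Fin n → ℝ)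
    (P Q : Matrix (Fin n) (Fin n) ℝ) (μ : ℝ) (U : Fin N → ℝ) (x : Fin n → ℝ) :
    costJ A B P Q μ U x
      = (fun ip : Fin N × Fin n =>
            stateSeq A B x (fun i => if h : i < N then U ⟨i, h⟩ else 0) ((ip.1 : ℕ) + 1) ip.2)
          ⬝ᵥ (QbarMat N P Q *ᵥ (fun ip =>
            stateSeq A B x (fun i => if h : i < N then U ⟨i, h⟩ else 0) ((ip.1 : ℕ) + 1) ip.2))
        + x ⬝ᵥ Q *ᵥ x + μ * ∑ i : Fin N, |U i| := by
  set u : ℕ → ℝ := fun i => if h : i < N then U ⟨i, h⟩ else 0 with hu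
  set s : ℕ → Fin n → ℝ := stateSeq A B x u with hs
  rw [qbar_dot]
  have hcost : costJ A B P Q μ U x
      = s N ⬝ᵥ P *ᵥ s N + ∑ i : Fin N, s (i : ℕ) ⬝ᵥ Q *ᵥ s (i : ℕ)
        + μ * ∑ i : Fin N, |U i| := rfl
  rw [hcost]
  have hblock : ∀ i : Fin N,
      (fun p => s ((i : ℕ) + 1) p) ⬝ᵥ
          ((if (i : ℕ) = N - 1 then P else Q) *ᵥ fun p => s ((i : ℕ) + 1) p)
        = s ((i : ℕ) + 1) ⬝ᵥ ((if (i : ℕ) = N - 1 then P else Q) *ᵥ s ((i : ℕ) + 1)) :=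
    fun i => rfl
  simp only [hblock]
  obtain ⟨M, rfl⟩ : ∃ M, N = M + 1 := ⟨N - 1, by omega⟩
  set fN : ℕ → ℝ := fun i => s i ⬝ᵥ Q *ᵥ s i with hfN
  set gN : ℕ → ℝ := fun i => s (i + 1) ⬝ᵥ ((if i = M then P else Q) *ᵥ s (i + 1)) with hgN
  have h1 : ∑ i : Fin (M + 1), s (i : ℕ) ⬝ᵥ Q *ᵥ s (i : ℕ)
      = ∑ i ∈ Finset.range (M + 1), fN i := Fin.sum_univ_eq_sum_range fN (M + 1)
  have h2 : ∑ i : Fin (M + 1),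
      s ((i : ℕ) + 1) ⬝ᵥ ((if (i : ℕ) = M + 1 - 1 then P else Q) *ᵥ s ((i : ℕ) + 1))
      = ∑ i ∈ Finset.range (M + 1), gN i := Fin.sum_univ_eq_sum_range gN (M + 1)
  rw [h1, h2, Finset.sum_range_succ', Finset.sum_range_succ]
  have h3 : gN M = s (M + 1) ⬝ᵥ P *ᵥ s (M + 1) := by rw [hgN]; simp
  have h4 : ∀ i ∈ Finset.range M, gN i = fN (i + 1) := by
    intro i hi
    rw [Finset.mem_range] at hi
    rw [hgN, hfN]
    simp only [if_neg (Nat.ne_of_lt hi)]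
  have h5 : fN 0 = x ⬝ᵥ Q *ᵥ x := rfl
  rw [h3, Finset.sum_congr rfl h4, h5]
  ring

/-- **Bounds on the value function.** For every `x ∈ ℝⁿ`,
`λ_min(Q)‖x‖₂² ≤ V(x) ≤ a₁‖x‖₂ + (a₂ + λ_max(Q))‖x‖₂²`, where
`a₁ = μ√N σ_max(G⁺H)` and `a₂ = σ_max²((GG⁺ − I)H)`. -/
theorem value_function_bounds {n N : ℕ} (hN : 1 ≤ N)
    (A : Matrix (Fin n) (Fin n) ℝ) (B : Fin n → ℝ) (hB : B ≠ 0)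
    (P Q : Matrix (Fin n) (Fin n) ℝ) (hP : P.PosDef) (hQ : Q.PosDef)
    (μ : ℝ) (hμ : 0 < μ) (x : Fin n → ℝ) :
    let G := matSqrt (QbarMat N P Q) * PhiMat N A B
    let H := -(matSqrt (QbarMat N P Q) * UpsMat N A)
    let Gp := (Gᵀ * G)⁻¹ * Gᵀ
    let a1 := μ * Real.sqrt N * sigmaMax (Gp * H)
    let a2 := (sigmaMax ((G * Gp - 1) * H)) ^ 2
    let V := ⨅ U : Fin N → ℝ, costJ A B P Q μ U x
    (⨅ j, hQ.1.eigenvalues j) * (x ⬝ᵥ x) ≤ V ∧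
      V ≤ a1 * Real.sqrt (x ⬝ᵥ x) + (a2 + ⨆ j, hQ.1.eigenvalues j) * (x ⬝ᵥ x) := by
  intro G H Gp a1 a2 V
  -- nonnegativity of the cost
  have hcost_nonneg : ∀ U : Fin N → ℝ, 0 ≤ costJ A B P Q μ U x := by
    intro U
    set u : ℕ → ℝ := fun i => if h : i < N then U ⟨i, h⟩ else 0 with hu
    have hexp : costJ A B P Q μ U x
        = stateSeq A B x u N ⬝ᵥ P *ᵥ stateSeq A B x u N
          + ∑ i : Fin N, stateSeq A B x u (i : ℕ) ⬝ᵥ Q *ᵥ stateSeq A B x u (i : ℕ)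
          + μ * ∑ i : Fin N, |U i| := rfl
    rw [hexp]
    have h1 : 0 ≤ stateSeq A B x u N ⬝ᵥ P *ᵥ stateSeq A B x u N := by
      simpa using hP.posSemidef.dotProduct_mulVec_nonneg (stateSeq A B x u N)
    have h2 : 0 ≤ ∑ i : Fin N, stateSeq A B x u (i : ℕ) ⬝ᵥ Q *ᵥ stateSeq A B x u (i : ℕ) :=
      Finset.sum_nonneg fun i _ => by simpa using hQ.posSemidef.dotProduct_mulVec_nonneg (stateSeq A B x u (i : ℕ))
    have h3 : 0 ≤ μ * ∑ i : Fin N, |U i| :=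
      mul_nonneg hμ.le (Finset.sum_nonneg fun i _ => abs_nonneg _)
    linarith
  constructor
  · -- lower bound
    refine le_ciInf fun U => ?_
    set u : ℕ → ℝ := fun i => if h : i < N then U ⟨i, h⟩ else 0 with hu
    have hexp : costJ A B P Q μ U x
        = stateSeq A B x u N ⬝ᵥ P *ᵥ stateSeq A B x u N
          + ∑ i : Fin N, stateSeq A B x u (i : ℕ) ⬝ᵥ Q *ᵥ stateSeq A B x u (i : ℕ)
          + μ * ∑ i : Fin N, |U i| := rfl
    rw [hexp]
    have hsum : (⨅ j, hQ.1.eigenvalues j) * (x ⬝ᵥ x)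
        ≤ ∑ i : Fin N, stateSeq A B x u (i : ℕ) ⬝ᵥ Q *ᵥ stateSeq A B x u (i : ℕ) := by
      refine le_trans (rayleigh_ge hQ.1 x) ?_
      have h0 : x ⬝ᵥ Q *ᵥ x
          = stateSeq A B x u (((⟨0, hN⟩ : Fin N) : ℕ)) ⬝ᵥ
              Q *ᵥ stateSeq A B x u (((⟨0, hN⟩ : Fin N) : ℕ)) := rfl
      rw [h0]
      exact Finset.single_le_sum
        (f := fun i : Fin N => stateSeq A B x u (i : ℕ) ⬝ᵥ Q *ᵥ stateSeq A B x u (i : ℕ))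
        (fun i _ => by simpa using hQ.posSemidef.dotProduct_mulVec_nonneg (stateSeq A B x u (i : ℕ)))
        (Finset.mem_univ _)
    have h1 : 0 ≤ stateSeq A B x u N ⬝ᵥ P *ᵥ stateSeq A B x u N := by
      simpa using hP.posSemidef.dotProduct_mulVec_nonneg (stateSeq A B x u N)
    have h3 : 0 ≤ μ * ∑ i : Fin N, |U i| :=
      mul_nonneg hμ.le (Finset.sum_nonneg fun i _ => abs_nonneg _)
    linarith
  · -- upper bound
    have hpsd : (QbarMat N P Q).PosSemidef := qbar_psd hP hQ
    have hSdef : matSqrt (QbarMat N P Q) = hpsd.1.eigenvectorUnitary.1 * diagonal ((RCLike.ofReal : ℝ → ℝ) ∘ (√·) ∘ hpsd.1.eigenvalues) *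
      (star hpsd.1.eigenvectorUnitary : Matrix (Fin N × Fin n) (Fin N × Fin n) ℝ) := dif_pos hpsd
    set S : Matrix (Fin N × Fin n) (Fin N × Fin n) ℝ := matSqrt (QbarMat N P Q) with hS0
    have hU : (star hpsd.1.eigenvectorUnitary : Matrix (Fin N × Fin n) (Fin N × Fin n) ℝ) *
        hpsd.1.eigenvectorUnitary.1 = 1 :=
      Unitary.coe_star_mul_self _
    have hSS : S * S = QbarMat N P Q := by
      rw [hSdef]
      conv_rhs => rw [hpsd.1.spectral_theorem, Unitary.conjStarAlgAut_apply]
      rw [show ∀ a b c d e f : Matrix (Fin N × Fin n) (Fin N × Fin n) ℝ,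
          a * b * c * (d * e * f) = a * (b * (c * d) * e) * f from
        fun a b c d e f => by simp only [Matrix.mul_assoc], hU, Matrix.mul_one, diagonal_mul_diagonal]
      congr 3
      ext i
      simp [Real.mul_self_sqrt (hpsd.eigenvalues_nonneg i)]
    have hSsymm : Sᵀ = S := by
      rw [hSdef, Matrix.transpose_mul, Matrix.transpose_mul, diagonal_transpose,
        star_eq_conjTranspose, conjTranspose_eq_transpose_of_trivial, transpose_transpose,
        Matrix.mul_assoc]
    set Un : Fin N → ℝ := (Gp * H) *ᵥ x with hUn
    have hVle : V ≤ costJ A B P Q μ Un x :=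
      ciInf_le ⟨0, by rintro y ⟨U, rfl⟩; exact hcost_nonneg U⟩ Un
    have hquad : (fun ip : Fin N × Fin n =>
        stateSeq A B x (fun i => if h : i < N then Un ⟨i, h⟩ else 0) ((ip.1 : ℕ) + 1) ip.2)
        = PhiMat N A B *ᵥ Un + UpsMat N A *ᵥ x := by
      funext ip
      exact state_stacked A B x Un ip.1 ip.2
    have hcd := cost_decomp hN A B P Q μ Un x
    rw [hquad] at hcd
    set v : Fin N × Fin n → ℝ := PhiMat N A B *ᵥ Un + UpsMat N A *ᵥ x with hv
    have hq1 : v ⬝ᵥ (QbarMat N P Q *ᵥ v) = (S *ᵥ v) ⬝ᵥ (S *ᵥ v) := by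
      have h : (S *ᵥ v) ⬝ᵥ (S *ᵥ v) = v ⬝ᵥ (QbarMat N P Q *ᵥ v) := by
        rw [Matrix.dotProduct_mulVec (S *ᵥ v) S v, ← Matrix.mulVec_transpose, hSsymm,
          Matrix.mulVec_mulVec, hSS, dotProduct_comm]
      exact h.symm
    have hSv : S *ᵥ v = ((G * Gp - 1) * H) *ᵥ x := by
      have e1 : S *ᵥ (PhiMat N A B *ᵥ Un) = G *ᵥ Un := by rw [Matrix.mulVec_mulVec]
      have e2 : S *ᵥ (UpsMat N A *ᵥ x) = (-H) *ᵥ x := by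
        rw [Matrix.mulVec_mulVec, show (-H : Matrix (Fin N × Fin n) (Fin n) ℝ)
          = S * UpsMat N A from neg_neg _]
      rw [hv, Matrix.mulVec_add, e1, e2, hUn, Matrix.mulVec_mulVec,
        show (G * Gp - 1) * H = G * (Gp * H) - H by rw [Matrix.sub_mul, Matrix.one_mul, Matrix.mul_assoc],
        Matrix.sub_mulVec, Matrix.neg_mulVec, sub_eq_add_neg]
    have hquadle : v ⬝ᵥ (QbarMat N P Q *ᵥ v) ≤ a2 * (x ⬝ᵥ x) := by
      rw [hq1, hSv]
      exact mulVec_dot_le ((G * Gp - 1) * H) x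
    have hxQ : x ⬝ᵥ Q *ᵥ x ≤ (⨆ j, hQ.1.eigenvalues j) * (x ⬝ᵥ x) := rayleigh_le hQ.1 x
    have hmu : μ * ∑ i : Fin N, |Un i| ≤ a1 * Real.sqrt (x ⬝ᵥ x) := by
      have h1 : ∑ i, |Un i| ≤ Real.sqrt N * Real.sqrt (Un ⬝ᵥ Un) := sum_abs_le_sqrt Un
      have h2 : Real.sqrt (Un ⬝ᵥ Un) ≤ sigmaMax (Gp * H) * Real.sqrt (x ⬝ᵥ x) := by
        rw [hUn]; exact sqrt_mulVec_dot_le (Gp * H) x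
      calc μ * ∑ i : Fin N, |Un i|
          ≤ μ * (Real.sqrt N * (sigmaMax (Gp * H) * Real.sqrt (x ⬝ᵥ x))) := by
            refine mul_le_mul_of_nonneg_left ?_ hμ.le
            exact h1.trans (mul_le_mul_of_nonneg_left h2 (Real.sqrt_nonneg _))
        _ = a1 * Real.sqrt (x ⬝ᵥ x) := by ring
    calc V ≤ costJ A B P Q μ Un x := hVle
      _ = v ⬝ᵥ (QbarMat N P Q *ᵥ v) + x ⬝ᵥ Q *ᵥ x + μ * ∑ i : Fin N, |Un i| := hcd
      _ ≤ a1 * Real.sqrt (x ⬝ᵥ x) + (a2 + ⨆ j, hQ.1.eigenvalues j) * (x ⬝ᵥ x) := by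
          rw [add_mul]
          linarith
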